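/- Let n > 4. The quasidihedral group QD_{2^n} has exactly three subgroups of index 2, namely ⟨a⟩, which is cyclic of order 2^{n-1}; ⟨a^2, b⟩, which is isomorphic to the dihedral group of order 2^{n-1}; and ⟨a^2, ab⟩, which is isomorphic to the generalized quaternion group of order 2^{n-1}. -/

import Mathlib

open Multiplicative SemidirectProduct

namespace QDtmp

lemma multZMod2_cases (c : Multiplicative (ZMod 2)) : c = 1 ∨ c = ofAdd 1 := by
  rcases (by decide : ∀ t : ZMod 2, t = 0 ∨ t = 1) (toAdd c) with h | h
  · left; rw [← ofAdd_toAdd c, h, ofAdd_zero]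
  · right; rw [← ofAdd_toAdd c, h]

lemma pow_odd (y : Multiplicative (ZMod 2)) {e : ℕ} (he : e % 2 = 1) : y ^ e = y := by
  rcases multZMod2_cases y with rfl | rfl
  · simp
  · rw [← ofAdd_nsmul, nsmul_eq_mul, mul_one, ← ZMod.natCast_mod, he]
    norm_num

noncomputable def dd (N m : ℕ) (h : ((2 * m : ℕ) : ZMod N) = 0) : ZMod m →+ ZMod N :=
  ZMod.lift m ⟨(AddMonoidHom.mulLeft (2 : ZMod N)).comp (Int.castAddHom (ZMod N)), by
    push_cast at h ⊢; simpa using h⟩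

lemma dd_natCast (N m : ℕ) (h : ((2 * m : ℕ) : ZMod N) = 0) (k : ℕ) :
    dd N m h ((k : ℕ) : ZMod m) = ((2 * k : ℕ) : ZMod N) := by
  have : ((k : ℕ) : ZMod m) = ((k : ℤ) : ZMod m) := by push_cast; rfl
  rw [this, dd, ZMod.lift_coe]
  push_cast; simp

section Main

variable (n : ℕ) (hn : 4 < n)
  (φ : Multiplicative (ZMod 2) →* MulAut (Multiplicative (ZMod (2 ^ (n - 1)))))
  (hφ : ∀ x : Multiplicative (ZMod (2 ^ (n - 1))),
      φ (Multiplicative.ofAdd 1) x = x ^ (2 ^ (n - 2) - 1))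

local notation "Q" => Multiplicative (ZMod (2 ^ (n - 1))) ⋊[φ] Multiplicative (ZMod 2)

def aa : Q := inl (ofAdd (1 : ZMod (2 ^ (n - 1))))
def bb : Q := inr (ofAdd (1 : ZMod 2))

lemma aa_pow (k : ℕ) : (aa n φ) ^ k = inl (ofAdd ((k : ZMod (2 ^ (n - 1))))) := by
  rw [aa, ← map_pow, ← ofAdd_nsmul, nsmul_eq_mul, mul_one]

include hn

lemma two_pow_sub_one_odd : (2 ^ (n - 2) - 1) % 2 = 1 := by
  obtain ⟨t, ht⟩ : (2 : ℕ) ∣ 2 ^ (n - 2) := dvd_pow_self 2 (by omega)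
  have h1 : 1 ≤ 2 ^ (n - 2) := Nat.one_le_two_pow
  omega

/-- `f1`: reduction mod 2 on the left factor. -/
noncomputable def f1 : Multiplicative (ZMod (2 ^ (n - 1))) →* Multiplicative (ZMod 2) :=
  AddMonoidHom.toMultiplicative
    (ZMod.castHom (show (2:ℕ) ∣ 2 ^ (n - 1) from dvd_pow_self 2 (by omega)) (ZMod 2)).toAddMonoidHom

lemma f1_apply (x : ZMod (2 ^ (n - 1))) :
    f1 n hn (ofAdd x) = ofAdd ((x.val : ZMod 2)) := by
  simp [f1, ZMod.castHom_apply, ZMod.natCast_val]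

include hφ in
lemma f1_compat (c : Multiplicative (ZMod 2)) (x : Multiplicative (ZMod (2 ^ (n - 1)))) :
    f1 n hn (φ c x) = f1 n hn x := by
  rcases multZMod2_cases c with rfl | rfl
  · rw [map_one φ]; rfl
  · rw [hφ, map_pow, pow_odd _ (two_pow_sub_one_odd n hn)]


include hφ in
lemma f1_compat' (c : Multiplicative (ZMod 2)) :
    (f1 n hn).comp (φ c).toMonoidHom = (f1 n hn) := by
  ext x
  exact f1_compat n hn φ hφ c x

/-- hom with kernel `⟨a², b⟩`. -/
noncomputable def fA : Q →* Multiplicative (ZMod 2) :=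
  SemidirectProduct.lift (f1 n hn) 1 (by
    intro c
    refine MonoidHom.ext fun x => ?_
    simp only [MonoidHom.comp_apply, MulEquiv.coe_toMonoidHom, MonoidHom.one_apply,
      MulAut.conj_apply, one_mul, inv_one, mul_one]
    exact f1_compat n hn φ hφ c x)

/-- hom with kernel `⟨a², ab⟩`. -/
noncomputable def fAB : Q →* Multiplicative (ZMod 2) :=
  SemidirectProduct.lift (f1 n hn) (MonoidHom.id _) (by
    intro c
    refine MonoidHom.ext fun x => ?_
    simp only [MonoidHom.comp_apply, MulEquiv.coe_toMonoidHom, MonoidHom.id_apply,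
      MulAut.conj_apply]
    rw [f1_compat n hn φ hφ c x, mul_comm, inv_mul_cancel_left])

lemma fA_apply (m : Multiplicative (ZMod (2 ^ (n-1)))) (c : Multiplicative (ZMod 2)) :
    fA n hn φ hφ ⟨m, c⟩ = f1 n hn m := by
  rw [mk_eq_inl_mul_inr, map_mul]
  simp [fA]

lemma fAB_apply (m : Multiplicative (ZMod (2 ^ (n-1)))) (c : Multiplicative (ZMod 2)) :
    fAB n hn φ hφ ⟨m, c⟩ = f1 n hn m * c := by
  rw [mk_eq_inl_mul_inr, map_mul]
  simp [fAB]


lemma val_one_N1 : (1 : ZMod (2 ^ (n - 1))).val = 1 := by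
  haveI : Fact (1 < 2 ^ (n - 1)) := ⟨Nat.one_lt_two_pow_iff.mpr (by omega)⟩
  exact ZMod.val_one _

lemma fA_aa : fA n hn φ hφ (aa n φ) = ofAdd 1 := by
  rw [aa, fA, lift_inl, f1_apply, val_one_N1 n hn, Nat.cast_one]

lemma fA_bb : fA n hn φ hφ (bb n φ) = 1 := by
  rw [bb, fA, lift_inr]; rfl

lemma fAB_aa : fAB n hn φ hφ (aa n φ) = ofAdd 1 := by
  rw [aa, fAB, lift_inl, f1_apply, val_one_N1 n hn, Nat.cast_one]

lemma fAB_bb : fAB n hn φ hφ (bb n φ) = ofAdd 1 := by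
  rw [bb, fAB, lift_inr]; rfl

omit hn in
lemma ofAdd_one_ne : (ofAdd (1 : ZMod 2)) ≠ 1 := by decide

omit hn in
lemma sq_ofAdd_one : (ofAdd (1 : ZMod 2)) * (ofAdd (1 : ZMod 2)) = 1 := by decide

omit hn in
lemma decomp (g : Q) : g = inl g.left * inr g.right := (inl_left_mul_inr_right g).symm

omit hn in
lemma inl_even (t : ℕ) :
    (inl (ofAdd (((2 * t : ℕ) : ZMod (2 ^ (n - 1))))) : Q) = ((aa n φ) ^ 2) ^ t := by
  rw [← pow_mul, aa_pow]

omit hn in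
lemma inr_cases (c : Multiplicative (ZMod 2)) :
    (inr c : Q) = 1 ∨ (inr c : Q) = bb n φ := by
  rcases multZMod2_cases c with rfl | rfl
  · left; exact map_one _
  · right; rfl

lemma f1_apply' (m : Multiplicative (ZMod (2 ^ (n - 1)))) :
    f1 n hn m = ofAdd (((toAdd m).val : ZMod 2)) := f1_apply n hn (toAdd m)

lemma ker_fA : (fA n hn φ hφ).ker = Subgroup.closure {(aa n φ) ^ 2, bb n φ} := by
  apply le_antisymm
  · intro g hg
    rw [MonoidHom.mem_ker] at hg
    obtain ⟨m, c⟩ := g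
    rw [fA_apply, f1_apply'] at hg
    rw [ofAdd_eq_one, ZMod.natCast_eq_zero_iff] at hg
    obtain ⟨t, ht⟩ := hg
    have hm : (ofAdd (toAdd m) : Multiplicative (ZMod (2 ^ (n - 1))))
        = ofAdd (((2 * t : ℕ) : ZMod (2 ^ (n - 1)))) := by
      rw [← ht, ZMod.natCast_rightInverse _]
    rw [decomp n φ ⟨m, c⟩]
    have h1 : (inl (⟨m, c⟩ : Q).left : Q) ∈ Subgroup.closure {(aa n φ) ^ 2, bb n φ} := by
      show (inl m : Q) ∈ _
      rw [show m = ofAdd (toAdd m) from rfl, hm, inl_even]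
      exact pow_mem (Subgroup.subset_closure (Set.mem_insert _ _)) t
    have h2 : (inr (⟨m, c⟩ : Q).right : Q) ∈ Subgroup.closure {(aa n φ) ^ 2, bb n φ} := by
      rcases inr_cases n φ c with h | h
      · rw [show (⟨m, c⟩ : Q).right = c from rfl, h]; exact one_mem _
      · rw [show (⟨m, c⟩ : Q).right = c from rfl, h]
        exact Subgroup.subset_closure (Set.mem_insert_iff.mpr (Or.inr rfl))
    exact mul_mem h1 h2
  · rw [Subgroup.closure_le]
    rintro x (rfl | rfl)
    · show _ ∈ (fA n hn φ hφ).ker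
      rw [MonoidHom.mem_ker, map_pow, fA_aa, pow_two, sq_ofAdd_one]
    · show _ ∈ (fA n hn φ hφ).ker
      rw [MonoidHom.mem_ker, fA_bb]


omit hn in
lemma inl_odd (t : ℕ) :
    (inl (ofAdd (((2 * t + 1 : ℕ) : ZMod (2 ^ (n - 1))))) : Q) = ((aa n φ) ^ 2) ^ t * aa n φ := by
  rw [← pow_mul, ← pow_succ, aa_pow]

lemma ker_fAB : (fAB n hn φ hφ).ker = Subgroup.closure {(aa n φ) ^ 2, aa n φ * bb n φ} := by
  apply le_antisymm
  · intro g hg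
    rw [MonoidHom.mem_ker] at hg
    obtain ⟨m, c⟩ := g
    rw [fAB_apply, f1_apply'] at hg
    rw [decomp n φ ⟨m, c⟩]
    show (inl m : Q) * inr c ∈ _
    have hm : ∀ t : ℕ, (toAdd m).val = t →
        m = ofAdd (((t : ℕ) : ZMod (2 ^ (n - 1)))) := by
      rintro t rfl
      exact (congrArg ofAdd (ZMod.natCast_rightInverse _)).symm
    rcases multZMod2_cases c with rfl | rfl
    · rw [mul_one] at hg
      rw [ofAdd_eq_one, ZMod.natCast_eq_zero_iff] at hg
      obtain ⟨t, ht⟩ := hg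
      rw [hm (2 * t) ht, inl_even, map_one, mul_one]
      exact pow_mem (Subgroup.subset_closure (Set.mem_insert _ _)) t
    · have hodd : (toAdd m).val % 2 = 1 := by
        have h2 : (((toAdd m).val : ZMod 2)) = 1 := by
          have := hg
          rcases (by decide : ∀ t : ZMod 2, t = 0 ∨ t = 1) (((toAdd m).val : ZMod 2)) with h | h
          · exfalso
            rw [h] at this
            revert this
            decide
          · exact h
        have := (ZMod.natCast_mod ((toAdd m).val) 2)
        rcases Nat.mod_two_eq_zero_or_one ((toAdd m).val) with h | h
        · exfalso
          rw [← this, h] at h2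
          revert h2
          decide
        · exact h
      obtain ⟨t, ht⟩ : ∃ t, (toAdd m).val = 2 * t + 1 := ⟨(toAdd m).val / 2, by omega⟩
      rw [hm _ ht, inl_odd, mul_assoc]
      refine mul_mem (pow_mem (Subgroup.subset_closure (Set.mem_insert _ _)) t) ?_
      exact Subgroup.subset_closure (Set.mem_insert_iff.mpr (Or.inr rfl))
  · rw [Subgroup.closure_le]
    rintro x (rfl | rfl)
    · show _ ∈ (fAB n hn φ hφ).ker
      rw [MonoidHom.mem_ker, map_pow, fAB_aa, pow_two, sq_ofAdd_one]
    · show _ ∈ (fAB n hn φ hφ).ker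
      rw [MonoidHom.mem_ker, map_mul, fAB_aa, fAB_bb, sq_ofAdd_one]

omit hn hφ in
lemma ker_fB : (rightHom : Q →* Multiplicative (ZMod 2)).ker = Subgroup.zpowers (aa n φ) := by
  apply le_antisymm
  · intro g hg
    rw [MonoidHom.mem_ker, rightHom_eq_right] at hg
    rw [decomp n φ g, hg, map_one, mul_one]
    rw [show g.left = ofAdd ((((toAdd g.left).val : ℕ) : ZMod (2 ^ (n - 1)))) from
      (congrArg ofAdd (ZMod.natCast_rightInverse _)).symm, ← aa_pow]
    exact pow_mem (Subgroup.mem_zpowers _) _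
  · rw [Subgroup.zpowers_le]
    rw [MonoidHom.mem_ker, aa, rightHom_inl]

omit hn hφ in
lemma closure_aabb_top : Subgroup.closure {aa n φ, bb n φ} = ⊤ := by
  rw [eq_top_iff]
  intro g _
  rw [decomp n φ g]
  refine mul_mem ?_ ?_
  · rw [show g.left = ofAdd ((((toAdd g.left).val : ℕ) : ZMod (2 ^ (n - 1)))) from
      (congrArg ofAdd (ZMod.natCast_rightInverse _)).symm, ← aa_pow]
    exact pow_mem (Subgroup.subset_closure (Set.mem_insert _ _)) _
  · rcases inr_cases n φ g.right with h | h
    · rw [h]; exact one_mem _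
    · rw [h]; exact Subgroup.subset_closure (Set.mem_insert_iff.mpr (Or.inr rfl))


omit hn hφ in
lemma index_of_surj (f : Q →* Multiplicative (ZMod 2)) (hf : Function.Surjective f) :
    f.ker.index = 2 := by
  rw [Subgroup.index_ker, MonoidHom.range_eq_top.mpr hf, Subgroup.card_top,
    Nat.card_congr (Multiplicative.toAdd (α := ZMod 2)), Nat.card_zmod]

omit hn hφ in
lemma index_zp : (Subgroup.zpowers (aa n φ)).index = 2 := by
  rw [← ker_fB]
  exact index_of_surj n φ _ rightHom_surjective

include hn hφ in
lemma index_A2B : (Subgroup.closure {(aa n φ) ^ 2, bb n φ}).index = 2 := by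
  rw [← ker_fA n hn φ hφ]
  refine index_of_surj n φ _ ?_
  intro y
  rcases multZMod2_cases y with rfl | rfl
  · exact ⟨1, map_one _⟩
  · exact ⟨aa n φ, fA_aa n hn φ hφ⟩

include hn hφ in
lemma index_A2AB : (Subgroup.closure {(aa n φ) ^ 2, aa n φ * bb n φ}).index = 2 := by
  rw [← ker_fAB n hn φ hφ]
  refine index_of_surj n φ _ ?_
  intro y
  rcases multZMod2_cases y with rfl | rfl
  · exact ⟨1, map_one _⟩
  · exact ⟨aa n φ, fAB_aa n hn φ hφ⟩

omit hn hφ in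
lemma eq_of_le_idx (H K : Subgroup Q) (h : H ≤ K) (hH : H.index = 2) (hK : K.index = 2) :
    H = K := by
  have h2 := Subgroup.relIndex_mul_index h
  rw [hH, hK] at h2
  exact le_antisymm h (Subgroup.relIndex_eq_one.mp (by omega))

include hn hφ in
lemma classify (H : Subgroup Q) (hH : H.index = 2) :
    H = Subgroup.zpowers (aa n φ) ∨ H = Subgroup.closure {(aa n φ) ^ 2, bb n φ} ∨
      H = Subgroup.closure {(aa n φ) ^ 2, aa n φ * bb n φ} := by
  have ha2 : (aa n φ) ^ 2 ∈ H := by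
    rw [pow_two]
    exact Subgroup.mul_self_mem_of_index_two hH _
  by_cases haH : aa n φ ∈ H
  · left
    exact (eq_of_le_idx n φ _ H (Subgroup.zpowers_le.mpr haH) (index_zp n φ) hH).symm
  by_cases hbH : bb n φ ∈ H
  · right; left
    refine (eq_of_le_idx n φ _ H ?_ (index_A2B n hn φ hφ) hH).symm
    rw [Subgroup.closure_le]
    rintro x (rfl | rfl) <;> assumption
  · right; right
    have hab : aa n φ * bb n φ ∈ H := by
      rw [Subgroup.mul_mem_iff_of_index_two hH]
      exact iff_of_false haH hbH
    refine (eq_of_le_idx n φ _ H ?_ (index_A2AB n hn φ hφ) hH).symm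
    rw [Subgroup.closure_le]
    rintro x (rfl | rfl) <;> assumption

omit hn hφ in
lemma bb_notin_zp : bb n φ ∉ Subgroup.zpowers (aa n φ) := by
  rw [← ker_fB, MonoidHom.mem_ker, bb, rightHom_inr]
  exact ofAdd_one_ne

omit hn hφ in
lemma aabb_notin_zp : aa n φ * bb n φ ∉ Subgroup.zpowers (aa n φ) := by
  rw [← ker_fB, MonoidHom.mem_ker, map_mul, bb, rightHom_inr, aa, rightHom_inl, one_mul]
  exact ofAdd_one_ne

include hn hφ in
lemma bb_notin_A2AB : bb n φ ∉ Subgroup.closure {(aa n φ) ^ 2, aa n φ * bb n φ} := by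
  rw [← ker_fAB n hn φ hφ, MonoidHom.mem_ker, fAB_bb n hn φ hφ]
  exact ofAdd_one_ne

omit hn hφ in
lemma isCyclic_zp : IsCyclic (Subgroup.zpowers (aa n φ)) := by
  constructor
  refine ⟨⟨aa n φ, Subgroup.mem_zpowers _⟩, ?_⟩
  rintro ⟨x, hx⟩
  obtain ⟨k, hk⟩ := Subgroup.mem_zpowers_iff.mp hx
  refine Subgroup.mem_zpowers_iff.mpr ⟨k, Subtype.ext ?_⟩
  rw [SubgroupClass.coe_zpow]
  exact hk

omit hn hφ in
lemma card_zp : Nat.card (Subgroup.zpowers (aa n φ)) = 2 ^ (n - 1) := by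
  rw [Nat.card_zpowers, aa, orderOf_injective inl inl_injective,
    orderOf_ofAdd_eq_addOrderOf, ZMod.addOrderOf_one]


section Amap

variable (m : ℕ) (h2m : 2 * m = 2 ^ (n - 1))

omit hn in
include h2m in
lemma hz : ((2 * m : ℕ) : ZMod (2 ^ (n - 1))) = 0 := by
  rw [h2m]; exact ZMod.natCast_self _

omit hn in
include h2m in
lemma m_ne_zero : m ≠ 0 := by
  have h1 : 1 ≤ 2 ^ (n - 1) := Nat.one_le_two_pow
  omega

noncomputable def Amap : ZMod m → Q :=
  fun i => inl (ofAdd (dd (2 ^ (n - 1)) m (hz n m h2m) i))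

omit hn in
lemma Amap_def (i : ZMod m) :
    Amap n φ m h2m i = inl (ofAdd (dd (2 ^ (n - 1)) m (hz n m h2m) i)) := rfl

omit hn in
lemma A_natCast (k : ℕ) : Amap n φ m h2m ((k : ℕ) : ZMod m) = (aa n φ) ^ (2 * k) := by
  rw [Amap_def, dd_natCast, aa_pow]

omit hn in
lemma A_mul (i j : ZMod m) :
    Amap n φ m h2m i * Amap n φ m h2m j = Amap n φ m h2m (i + j) := by
  rw [Amap_def, Amap_def, Amap_def, ← map_mul, ← ofAdd_add, ← map_add]

omit hn in
lemma A_zero : Amap n φ m h2m 0 = 1 := by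
  rw [Amap_def, map_zero, ofAdd_zero, map_one]

omit hn in
lemma dd_val (i : ZMod m) :
    dd (2 ^ (n - 1)) m (hz n m h2m) i = ((2 * i.val : ℕ) : ZMod (2 ^ (n - 1))) := by
  haveI : NeZero m := ⟨m_ne_zero n m h2m⟩
  conv_lhs => rw [← ZMod.natCast_rightInverse i]
  rw [dd_natCast]

omit hn in
lemma A_val_pow (i : ZMod m) : Amap n φ m h2m i = ((aa n φ) ^ 2) ^ i.val := by
  haveI : NeZero m := ⟨m_ne_zero n m h2m⟩
  conv_lhs => rw [← ZMod.natCast_rightInverse i]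
  rw [A_natCast, pow_mul]

omit hn in
lemma A_eq_one (i : ZMod m) (h : Amap n φ m h2m i = 1) : i = 0 := by
  haveI : NeZero m := ⟨m_ne_zero n m h2m⟩
  rw [Amap_def, show (1 : Q) = inl 1 from (map_one _).symm, inl_inj, ofAdd_eq_one,
    dd_val n m h2m] at h
  rw [ZMod.natCast_eq_zero_iff] at h
  obtain ⟨t, ht⟩ := h
  have hvlt : i.val < m := ZMod.val_lt i
  have : i.val = 0 := by
    rcases Nat.eq_zero_or_pos t with rfl | hpos
    · omega
    · nlinarith [ht, hvlt, h2m]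
  exact (ZMod.val_eq_zero i).mp this

lemma e_smul (w : ZMod (2 ^ (n - 1))) :
    (2 ^ (n - 2) - 1) • (2 * w) = -(2 * w) := by
  have hpow : 2 * 2 ^ (n - 2) = 2 ^ (n - 1) := by
    rw [← pow_succ']
    congr 1
    omega
  have h1 : 1 ≤ 2 ^ (n - 2) := Nat.one_le_two_pow
  have hc : ((2 * (2 ^ (n - 2) - 1) : ℕ) : ZMod (2 ^ (n - 1))) = -2 := by
    rw [show 2 * (2 ^ (n - 2) - 1) = 2 ^ (n - 1) - 2 by omega,
      Nat.cast_sub (by omega), ZMod.natCast_self]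
    push_cast
    ring
  rw [nsmul_eq_mul]
  calc ((2 ^ (n - 2) - 1 : ℕ) : ZMod (2 ^ (n - 1))) * (2 * w)
      = ((2 * (2 ^ (n - 2) - 1) : ℕ) : ZMod (2 ^ (n - 1))) * w := by push_cast; ring
    _ = -(2 * w) := by rw [hc]; ring

include hφ in
lemma bb_mul_A (i : ZMod m) :
    bb n φ * Amap n φ m h2m i = Amap n φ m h2m (-i) * bb n φ := by
  have h := (inl_aut (φ := φ) (ofAdd (1 : ZMod 2))
    (ofAdd (dd (2 ^ (n - 1)) m (hz n m h2m) i))).symm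
  rw [hφ, ← ofAdd_nsmul] at h
  have he : (2 ^ (n - 2) - 1) • dd (2 ^ (n - 1)) m (hz n m h2m) i
      = dd (2 ^ (n - 1)) m (hz n m h2m) (-i) := by
    rw [map_neg, dd_val n m h2m]
    have : ((2 * i.val : ℕ) : ZMod (2 ^ (n - 1)))
        = 2 * ((i.val : ℕ) : ZMod (2 ^ (n - 1))) := by push_cast; ring
    rw [this, e_smul n hn]
  rw [he] at h
  -- h : bb * inl (ofAdd (dd i)) * bb⁻¹ = inl (ofAdd (dd (-i)))
  rw [Amap_def, Amap_def, ← h, bb, map_inv, inv_mul_cancel_right]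

omit hn in
lemma aa_mul_A (i : ZMod m) :
    aa n φ * Amap n φ m h2m i = Amap n φ m h2m i * aa n φ := by
  rw [aa, Amap_def, ← map_mul inl, ← map_mul inl, mul_comm]

include hφ in
lemma ss_mul_A (i : ZMod m) :
    (aa n φ * bb n φ) * Amap n φ m h2m i = Amap n φ m h2m (-i) * (aa n φ * bb n φ) := by
  rw [mul_assoc, bb_mul_A n hn φ hφ m h2m, ← mul_assoc, aa_mul_A n φ m h2m, mul_assoc]

omit hn hφ in
lemma bb_bb : bb n φ * bb n φ = 1 := by
  rw [bb, ← map_mul, sq_ofAdd_one, map_one]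

include hφ in
lemma bb_mul_aa : bb n φ * aa n φ = (aa n φ) ^ (2 ^ (n - 2) - 1) * bb n φ := by
  have h := (inl_aut (φ := φ) (ofAdd (1 : ZMod 2))
    (ofAdd (1 : ZMod (2 ^ (n - 1))))).symm
  rw [hφ] at h
  have : (inl ((ofAdd (1 : ZMod (2 ^ (n - 1)))) ^ (2 ^ (n - 2) - 1)) : Q)
      = (aa n φ) ^ (2 ^ (n - 2) - 1) := by rw [map_pow, aa]
  rw [this] at h
  rw [← h, bb, aa, map_inv, inv_mul_cancel_right]

include hφ in
lemma ss_ss : (aa n φ * bb n φ) * (aa n φ * bb n φ) = (aa n φ) ^ (2 ^ (n - 2)) := by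
  have h1 : 1 ≤ 2 ^ (n - 2) := Nat.one_le_two_pow
  calc (aa n φ * bb n φ) * (aa n φ * bb n φ)
      = aa n φ * (bb n φ * aa n φ) * bb n φ := by group
    _ = aa n φ * ((aa n φ) ^ (2 ^ (n - 2) - 1) * bb n φ) * bb n φ := by
        rw [bb_mul_aa n hn φ hφ]
    _ = (aa n φ) ^ (2 ^ (n - 2) - 1 + 1) * (bb n φ * bb n φ) := by
        rw [pow_succ']
        group
    _ = (aa n φ) ^ (2 ^ (n - 2)) := by rw [bb_bb, mul_one]; congr 1; omega


include hφ in
lemma A_mul_bb (i : ZMod m) :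
    Amap n φ m h2m i * bb n φ = bb n φ * Amap n φ m h2m (-i) := by
  have h := bb_mul_A n hn φ hφ m h2m (-i)
  rw [neg_neg] at h
  exact h.symm

include hφ in
lemma A_mul_ss (i : ZMod m) :
    Amap n φ m h2m i * (aa n φ * bb n φ) = (aa n φ * bb n φ) * Amap n φ m h2m (-i) := by
  have h := ss_mul_A n hn φ hφ m h2m (-i)
  rw [neg_neg] at h
  exact h.symm

include hφ in
lemma rel2 (i j : ZMod m) :
    bb n φ * Amap n φ m h2m (j - i) = Amap n φ m h2m i * (bb n φ * Amap n φ m h2m j) := by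
  calc bb n φ * Amap n φ m h2m (j - i)
      = bb n φ * (Amap n φ m h2m (-i) * Amap n φ m h2m j) := by
        rw [A_mul, neg_add_eq_sub]
    _ = (bb n φ * Amap n φ m h2m (-i)) * Amap n φ m h2m j := by rw [mul_assoc]
    _ = (Amap n φ m h2m i * bb n φ) * Amap n φ m h2m j := by
        rw [A_mul_bb n hn φ hφ m h2m i]
    _ = Amap n φ m h2m i * (bb n φ * Amap n φ m h2m j) := by rw [mul_assoc]

omit hn in
lemma rel3 (i j : ZMod m) :
    bb n φ * Amap n φ m h2m (i + j) = (bb n φ * Amap n φ m h2m i) * Amap n φ m h2m j := by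
  rw [mul_assoc, A_mul]

include hφ in
lemma rel4 (i j : ZMod m) :
    Amap n φ m h2m (j - i) = (bb n φ * Amap n φ m h2m i) * (bb n φ * Amap n φ m h2m j) := by
  calc Amap n φ m h2m (j - i)
      = Amap n φ m h2m (-i) * Amap n φ m h2m j := by rw [A_mul, neg_add_eq_sub]
    _ = (bb n φ * bb n φ) * (Amap n φ m h2m (-i) * Amap n φ m h2m j) := by
        rw [bb_bb, one_mul]
    _ = bb n φ * ((bb n φ * Amap n φ m h2m (-i)) * Amap n φ m h2m j) := by
        rw [mul_assoc, mul_assoc]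
    _ = bb n φ * ((Amap n φ m h2m i * bb n φ) * Amap n φ m h2m j) := by
        rw [A_mul_bb n hn φ hφ m h2m i]
    _ = (bb n φ * Amap n φ m h2m i) * (bb n φ * Amap n φ m h2m j) := by
        rw [mul_assoc, mul_assoc]

include hφ in
lemma rel2s (i j : ZMod m) :
    (aa n φ * bb n φ) * Amap n φ m h2m (j - i)
      = Amap n φ m h2m i * ((aa n φ * bb n φ) * Amap n φ m h2m j) := by
  calc (aa n φ * bb n φ) * Amap n φ m h2m (j - i)
      = (aa n φ * bb n φ) * (Amap n φ m h2m (-i) * Amap n φ m h2m j) := by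
        rw [A_mul, neg_add_eq_sub]
    _ = ((aa n φ * bb n φ) * Amap n φ m h2m (-i)) * Amap n φ m h2m j := by group
    _ = (Amap n φ m h2m i * (aa n φ * bb n φ)) * Amap n φ m h2m j := by
        rw [A_mul_ss n hn φ hφ m h2m i]
    _ = Amap n φ m h2m i * ((aa n φ * bb n φ) * Amap n φ m h2m j) := by group

omit hn in
lemma rel3s (i j : ZMod m) :
    (aa n φ * bb n φ) * Amap n φ m h2m (i + j)
      = ((aa n φ * bb n φ) * Amap n φ m h2m i) * Amap n φ m h2m j := by
  calc (aa n φ * bb n φ) * Amap n φ m h2m (i + j)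
      = (aa n φ * bb n φ) * (Amap n φ m h2m i * Amap n φ m h2m j) := by rw [A_mul]
    _ = ((aa n φ * bb n φ) * Amap n φ m h2m i) * Amap n φ m h2m j := by group

include hφ in
lemma rel4s (q i j : ZMod m) (hq : (aa n φ * bb n φ) * (aa n φ * bb n φ) = Amap n φ m h2m q) :
    Amap n φ m h2m (q + j - i)
      = ((aa n φ * bb n φ) * Amap n φ m h2m i) * ((aa n φ * bb n φ) * Amap n φ m h2m j) := by
  set s := aa n φ * bb n φ with hs
  calc Amap n φ m h2m (q + j - i)
      = Amap n φ m h2m q * (Amap n φ m h2m (-i) * Amap n φ m h2m j) := by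
        rw [A_mul, A_mul]
        congr 1
        ring
    _ = (s * s) * (Amap n φ m h2m (-i) * Amap n φ m h2m j) := by rw [hq]
    _ = s * ((s * Amap n φ m h2m (-i)) * Amap n φ m h2m j) := by group
    _ = s * ((Amap n φ m h2m i * s) * Amap n φ m h2m j) := by
        rw [A_mul_ss n hn φ hφ m h2m i]
    _ = (s * Amap n φ m h2m i) * (s * Amap n φ m h2m j) := by group

omit hn hφ in
lemma rightHom_A (i : ZMod m) : rightHom (Amap n φ m h2m i) = 1 := by
  rw [Amap_def, rightHom_inl]

end Amap


section Dih

lemma h2m_dih : 2 * 2 ^ (n - 2) = 2 ^ (n - 1) := by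
  rw [← pow_succ']
  congr 1
  omega

noncomputable def dih : DihedralGroup (2 ^ (n - 2)) →* Q :=
{ toFun := fun x => match x with
    | DihedralGroup.r i => Amap n φ (2 ^ (n - 2)) (h2m_dih n hn) i
    | DihedralGroup.sr i => bb n φ * Amap n φ (2 ^ (n - 2)) (h2m_dih n hn) i
  map_one' := A_zero n φ (2 ^ (n - 2)) (h2m_dih n hn)
  map_mul' := by
    rintro (i | i) (j | j)
    · exact (A_mul n φ (2 ^ (n - 2)) (h2m_dih n hn) i j).symm
    · exact rel2 n hn φ hφ (2 ^ (n - 2)) (h2m_dih n hn) i j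
    · exact rel3 n φ (2 ^ (n - 2)) (h2m_dih n hn) i j
    · exact rel4 n hn φ hφ (2 ^ (n - 2)) (h2m_dih n hn) i j }

lemma dih_r (i : ZMod (2 ^ (n - 2))) :
    dih n hn φ hφ (DihedralGroup.r i) = Amap n φ (2 ^ (n - 2)) (h2m_dih n hn) i := rfl

lemma dih_sr (i : ZMod (2 ^ (n - 2))) :
    dih n hn φ hφ (DihedralGroup.sr i)
      = bb n φ * Amap n φ (2 ^ (n - 2)) (h2m_dih n hn) i := rfl

lemma dih_inj : Function.Injective (dih n hn φ hφ) := by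
  rw [injective_iff_map_eq_one]
  rintro (i | i) h
  · rw [dih_r] at h
    rw [DihedralGroup.one_def, A_eq_one n φ (2 ^ (n - 2)) (h2m_dih n hn) i h]
  · exfalso
    rw [dih_sr] at h
    have := congrArg rightHom h
    rw [map_mul, rightHom_A, mul_one, bb, rightHom_inr,
      show (rightHom (1 : Q)) = 1 from map_one _] at this
    exact ofAdd_one_ne this

lemma dih_range :
    (dih n hn φ hφ).range = Subgroup.closure {(aa n φ) ^ 2, bb n φ} := by
  apply le_antisymm
  · rintro x ⟨y, rfl⟩
    rcases y with i | i
    · rw [dih_r, A_val_pow]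
      exact pow_mem (Subgroup.subset_closure (Set.mem_insert _ _)) _
    · rw [dih_sr, A_val_pow]
      exact mul_mem (Subgroup.subset_closure (Set.mem_insert_iff.mpr (Or.inr rfl)))
        (pow_mem (Subgroup.subset_closure (Set.mem_insert _ _)) _)
  · rw [Subgroup.closure_le]
    rintro x (rfl | rfl)
    · refine ⟨DihedralGroup.r 1, ?_⟩
      rw [dih_r, show (1 : ZMod (2 ^ (n - 2))) = ((1 : ℕ) : ZMod (2 ^ (n - 2))) by
        rw [Nat.cast_one], A_natCast, mul_one]
    · refine ⟨DihedralGroup.sr 0, ?_⟩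
      rw [dih_sr, A_zero, mul_one]

include hn hφ in
lemma dih_equiv :
    Nonempty (Subgroup.closure {(aa n φ) ^ 2, bb n φ} ≃* DihedralGroup (2 ^ (n - 2))) :=
  ⟨((MonoidHom.ofInjective (dih_inj n hn φ hφ)).trans
      (MulEquiv.subgroupCongr (dih_range n hn φ hφ))).symm⟩

end Dih


section Quat

lemma h2m_quat : 2 * (2 * 2 ^ (n - 3)) = 2 ^ (n - 1) := by
  rw [← pow_succ', ← pow_succ']
  congr 1
  omega

include hφ in
lemma ss_ss_A : (aa n φ * bb n φ) * (aa n φ * bb n φ)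
    = Amap n φ (2 * 2 ^ (n - 3)) (h2m_quat n hn) ((2 ^ (n - 3) : ℕ) : ZMod (2 * 2 ^ (n - 3))) := by
  rw [A_natCast, ss_ss n hn φ hφ]
  congr 1
  rw [← pow_succ']
  congr 1
  omega

noncomputable def qua : QuaternionGroup (2 ^ (n - 3)) →* Q :=
{ toFun := fun x => match x with
    | QuaternionGroup.a i => Amap n φ (2 * 2 ^ (n - 3)) (h2m_quat n hn) i
    | QuaternionGroup.xa i =>
        (aa n φ * bb n φ) * Amap n φ (2 * 2 ^ (n - 3)) (h2m_quat n hn) i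
  map_one' := A_zero n φ (2 * 2 ^ (n - 3)) (h2m_quat n hn)
  map_mul' := by
    rintro (i | i) (j | j)
    · exact (A_mul n φ (2 * 2 ^ (n - 3)) (h2m_quat n hn) i j).symm
    · exact rel2s n hn φ hφ (2 * 2 ^ (n - 3)) (h2m_quat n hn) i j
    · exact rel3s n φ (2 * 2 ^ (n - 3)) (h2m_quat n hn) i j
    · exact rel4s n hn φ hφ (2 * 2 ^ (n - 3)) (h2m_quat n hn)
        ((2 ^ (n - 3) : ℕ) : ZMod (2 * 2 ^ (n - 3))) i j (ss_ss_A n hn φ hφ) }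

lemma qua_a (i : ZMod (2 * 2 ^ (n - 3))) :
    qua n hn φ hφ (QuaternionGroup.a i) = Amap n φ (2 * 2 ^ (n - 3)) (h2m_quat n hn) i := rfl

lemma qua_xa (i : ZMod (2 * 2 ^ (n - 3))) :
    qua n hn φ hφ (QuaternionGroup.xa i)
      = (aa n φ * bb n φ) * Amap n φ (2 * 2 ^ (n - 3)) (h2m_quat n hn) i := rfl

lemma qua_inj : Function.Injective (qua n hn φ hφ) := by
  rw [injective_iff_map_eq_one]
  rintro (i | i) h
  · rw [qua_a] at h
    rw [QuaternionGroup.one_def, A_eq_one n φ (2 * 2 ^ (n - 3)) (h2m_quat n hn) i h]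
  · exfalso
    rw [qua_xa] at h
    have := congrArg rightHom h
    rw [map_mul, rightHom_A, mul_one, map_mul, bb, aa, rightHom_inr, rightHom_inl, one_mul,
      show (rightHom (1 : Q)) = 1 from map_one _] at this
    exact ofAdd_one_ne this

lemma qua_range :
    (qua n hn φ hφ).range = Subgroup.closure {(aa n φ) ^ 2, aa n φ * bb n φ} := by
  apply le_antisymm
  · rintro x ⟨y, rfl⟩
    rcases y with i | i
    · rw [qua_a, A_val_pow]
      exact pow_mem (Subgroup.subset_closure (Set.mem_insert _ _)) _
    · rw [qua_xa, A_val_pow]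
      exact mul_mem (Subgroup.subset_closure (Set.mem_insert_iff.mpr (Or.inr rfl)))
        (pow_mem (Subgroup.subset_closure (Set.mem_insert _ _)) _)
  · rw [Subgroup.closure_le]
    rintro x (rfl | rfl)
    · refine ⟨QuaternionGroup.a 1, ?_⟩
      rw [qua_a, show (1 : ZMod (2 * 2 ^ (n - 3))) = ((1 : ℕ) : ZMod (2 * 2 ^ (n - 3))) by
        rw [Nat.cast_one], A_natCast, mul_one]
    · refine ⟨QuaternionGroup.xa 0, ?_⟩
      rw [qua_xa, A_zero, mul_one]

include hn hφ in
lemma qua_equiv :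
    Nonempty (Subgroup.closure {(aa n φ) ^ 2, aa n φ * bb n φ}
      ≃* QuaternionGroup (2 ^ (n - 3))) :=
  ⟨((MonoidHom.ofInjective (qua_inj n hn φ hφ)).trans
      (MulEquiv.subgroupCongr (qua_range n hn φ hφ))).symm⟩

end Quat


include hn hφ in
lemma final :
    (∀ H : Subgroup Q,
        H.index = 2 ↔
          H = Subgroup.zpowers (aa n φ) ∨ H = Subgroup.closure {(aa n φ) ^ 2, bb n φ} ∨
            H = Subgroup.closure {(aa n φ) ^ 2, aa n φ * bb n φ}) ∧
    Subgroup.zpowers (aa n φ) ≠ Subgroup.closure {(aa n φ) ^ 2, bb n φ} ∧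
    Subgroup.zpowers (aa n φ) ≠ Subgroup.closure {(aa n φ) ^ 2, aa n φ * bb n φ} ∧
    Subgroup.closure {(aa n φ) ^ 2, bb n φ} ≠ Subgroup.closure {(aa n φ) ^ 2, aa n φ * bb n φ} ∧
    IsCyclic (Subgroup.zpowers (aa n φ)) ∧ Nat.card (Subgroup.zpowers (aa n φ)) = 2 ^ (n - 1) ∧
    Nonempty (Subgroup.closure {(aa n φ) ^ 2, bb n φ} ≃* DihedralGroup (2 ^ (n - 2))) ∧
    Nonempty (Subgroup.closure {(aa n φ) ^ 2, aa n φ * bb n φ}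
      ≃* QuaternionGroup (2 ^ (n - 3))) := by
  refine ⟨?_, ?_, ?_, ?_, isCyclic_zp n φ, card_zp n φ, dih_equiv n hn φ hφ,
    qua_equiv n hn φ hφ⟩
  · intro H
    constructor
    · exact classify n hn φ hφ H
    · rintro (rfl | rfl | rfl)
      · exact index_zp n φ
      · exact index_A2B n hn φ hφ
      · exact index_A2AB n hn φ hφ
  · intro h
    exact bb_notin_zp n φ (by
      rw [h]
      exact Subgroup.subset_closure (Set.mem_insert_iff.mpr (Or.inr rfl)))
  · intro h
    exact aabb_notin_zp n φ (by
      rw [h]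
      exact Subgroup.subset_closure (Set.mem_insert_iff.mpr (Or.inr rfl)))
  · intro h
    exact bb_notin_A2AB n hn φ hφ (by
      rw [← h]
      exact Subgroup.subset_closure (Set.mem_insert_iff.mpr (Or.inr rfl)))

end Main

end QDtmp

/-- For `n > 4`, the quasidihedral group `QD_{2^n}` has exactly three subgroups of index 2:
`⟨a⟩`, cyclic of order `2^(n-1)`; `⟨a², b⟩ ≅ D_{2^{n-1}}` (dihedral of order `2^(n-1)`); and
`⟨a², ab⟩ ≅ Q_{2^{n-1}}` (generalized quaternion of order `2^(n-1)`). -/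
theorem quasidihedral_index_two_subgroups (n : ℕ) (hn : 4 < n)
    (φ : Multiplicative (ZMod 2) →* MulAut (Multiplicative (ZMod (2 ^ (n - 1)))))
    (hφ : ∀ x : Multiplicative (ZMod (2 ^ (n - 1))),
      φ (Multiplicative.ofAdd 1) x = x ^ (2 ^ (n - 2) - 1))
    (a b : Multiplicative (ZMod (2 ^ (n - 1))) ⋊[φ] Multiplicative (ZMod 2))
    (ha : a = SemidirectProduct.inl (Multiplicative.ofAdd (1 : ZMod (2 ^ (n - 1)))))
    (hb : b = SemidirectProduct.inr (Multiplicative.ofAdd (1 : ZMod 2))) :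
    (∀ H : Subgroup (Multiplicative (ZMod (2 ^ (n - 1))) ⋊[φ] Multiplicative (ZMod 2)),
        H.index = 2 ↔
          H = Subgroup.zpowers a ∨ H = Subgroup.closure {a ^ 2, b} ∨
            H = Subgroup.closure {a ^ 2, a * b}) ∧
    Subgroup.zpowers a ≠ Subgroup.closure {a ^ 2, b} ∧
    Subgroup.zpowers a ≠ Subgroup.closure {a ^ 2, a * b} ∧
    Subgroup.closure {a ^ 2, b} ≠ Subgroup.closure {a ^ 2, a * b} ∧
    IsCyclic (Subgroup.zpowers a) ∧ Nat.card (Subgroup.zpowers a) = 2 ^ (n - 1) ∧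
    Nonempty (Subgroup.closure {a ^ 2, b} ≃* DihedralGroup (2 ^ (n - 2))) ∧
    Nonempty (Subgroup.closure {a ^ 2, a * b} ≃* QuaternionGroup (2 ^ (n - 3))) := by
  subst ha hb
  exact QDtmp.final n hn φ hφ
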